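/- Let k ≥ 2, let x ∈ [0,1]^n be feasible for the strengthened LP of a k-column-sparse packing instance, let w ∈ ℝ_{≥0}^n, and let S include each item i independently with probability x_i/k. Let Alt'(T) = { i ∈ T : for every j ∈ N(i), Σ_{i' ∈ T : s_{i'j} ≥ s_{ij}} s_{i'j} ≤ 1 }. Then Alt'(S) is always feasible for the instance, and E[ Σ_{i ∈ Alt'(S)} w_i ] ≥ (1/k) · ( 1 − (1/k)(1 + (2/k)^{1/3}) )^k · Σ_{i=1}^n w_i x_i. (In particular, as k → ∞ this yields an (ek + o(k))-approximation for k-column-sparse packing integer programs relative to the strengthened LP optimum.) -/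

import Mathlib

open Finset
open scoped Classical BigOperators

/-- Probability of the subset `T` under the product distribution on subsets of
`Fin n` with marginal probabilities `q`. -/
noncomputable def prodP {n : ℕ} (q : Fin n → ℝ) (T : Finset (Fin n)) : ℝ :=
  (∏ i ∈ T, q i) * ∏ i ∈ Tᶜ, (1 - q i)

/-- Expectation of `g(S)` where `S` is drawn from the product distribution with
marginals `q`. -/
noncomputable def exV {n : ℕ} (q : Fin n → ℝ) (g : Finset (Fin n) → ℝ) : ℝ :=
  ∑ T : Finset (Fin n), prodP q T * g T

/-- The alteration map of the improved algorithm: keep `i ∈ T` iff for every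
constraint `j` in which `i` participates, the total size of the items of `T`
that are at least as large as `i` in constraint `j` is at most `1`. -/
noncomputable def altSet' {n m : ℕ} (s : Fin n → Fin m → ℝ) (T : Finset (Fin n)) :
    Finset (Fin n) :=
  T.filter (fun i => ∀ j, 0 < s i j →
    (∑ i' ∈ T.filter (fun i'' => s i j ≤ s i'' j), s i' j) ≤ 1)

section Basic
variable {n : ℕ} {q : Fin n → ℝ}

lemma prodP_eq (T : Finset (Fin n)) :
    prodP q T = ∏ i : Fin n, (if i ∈ T then q i else 1 - q i) := by
  rw [prodP, Finset.prod_ite]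
  congr 1
  · apply Finset.prod_congr _ (fun _ _ => rfl)
    ext i; simp
  · apply Finset.prod_congr _ (fun _ _ => rfl)
    ext i; simp

lemma prodP_nonneg (hq0 : ∀ i, 0 ≤ q i) (hq1 : ∀ i, q i ≤ 1) (T : Finset (Fin n)) :
    0 ≤ prodP q T := by
  rw [prodP_eq]
  apply Finset.prod_nonneg
  intro i _
  split
  · exact hq0 i
  · linarith [hq1 i]

lemma sum_finset_eq_sum_powerset (f : Finset (Fin n) → ℝ) :
    ∑ T : Finset (Fin n), f T = ∑ T ∈ (univ : Finset (Fin n)).powerset, f T := by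
  rw [Finset.powerset_univ]

lemma prodP_sum_one : ∑ T : Finset (Fin n), prodP q T = 1 := by
  have h := Finset.prod_add (fun i => q i) (fun i => 1 - q i) (univ : Finset (Fin n))
  simp only [add_sub_cancel, Finset.prod_const_one] at h
  rw [sum_finset_eq_sum_powerset, h]
  apply Finset.sum_congr rfl
  intro T hT
  simp [prodP, Finset.compl_eq_univ_sdiff]

/-- log-supermodularity (with equality) of the product measure. -/
lemma prodP_mul_prodP (a b : Finset (Fin n)) :
    prodP q a * prodP q b = prodP q (a ∩ b) * prodP q (a ∪ b) := by
  simp only [prodP_eq, ← Finset.prod_mul_distrib]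
  apply Finset.prod_congr rfl
  intro i _
  by_cases ha : i ∈ a <;> by_cases hb : i ∈ b <;>
    simp [ha, hb, Finset.mem_inter, Finset.mem_union, mul_comm]

lemma prodP_insert_rel {i : Fin n} {T : Finset (Fin n)} (hi : i ∉ T) :
    (1 - q i) * prodP q (insert i T) = q i * prodP q T := by
  simp only [prodP_eq]
  rw [← Finset.prod_erase_mul (univ : Finset (Fin n)) _ (Finset.mem_univ i),
      ← Finset.prod_erase_mul (univ : Finset (Fin n)) _ (Finset.mem_univ i)]
  have h1 : ∀ i' ∈ (univ : Finset (Fin n)).erase i,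
      (if i' ∈ insert i T then q i' else 1 - q i') = (if i' ∈ T then q i' else 1 - q i') := by
    intro i' hi'
    have : i' ≠ i := (Finset.mem_erase.1 hi').1
    simp [Finset.mem_insert, this]
  rw [Finset.prod_congr rfl h1]
  simp [hi]
  ring

end Basic

section Cond
variable {n : ℕ} {q : Fin n → ℝ}

/-- Conditioning on `i ∈ S`: the membership of `i` is independent of `S.erase i`. -/
lemma cond_indep (i : Fin n) (g : Finset (Fin n) → ℝ) :
    ∑ T : Finset (Fin n), prodP q T * ((if i ∈ T then (1:ℝ) else 0) * g (T.erase i))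
      = q i * ∑ T : Finset (Fin n), prodP q T * g (T.erase i) := by
  have hE : i ∉ (univ : Finset (Fin n)).erase i := Finset.notMem_erase i _
  have huniv : (univ : Finset (Fin n)) = insert i ((univ : Finset (Fin n)).erase i) := by
    rw [Finset.insert_erase (Finset.mem_univ i)]
  have key : ∀ f : Finset (Fin n) → ℝ, ∑ T : Finset (Fin n), f T
      = ∑ T ∈ ((univ : Finset (Fin n)).erase i).powerset, f T
        + ∑ T ∈ ((univ : Finset (Fin n)).erase i).powerset, f (insert i T) := by
    intro f
    rw [sum_finset_eq_sum_powerset]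
    conv_lhs => rw [huniv]
    rw [Finset.sum_powerset_insert hE]
  rw [key, key (fun T => prodP q T * g (T.erase i))]
  have hnotmem : ∀ T ∈ ((univ : Finset (Fin n)).erase i).powerset, i ∉ T := by
    intro T hT
    exact fun h => hE (Finset.mem_powerset.1 hT h)
  have h0 : ∑ T ∈ ((univ : Finset (Fin n)).erase i).powerset,
      prodP q T * ((if i ∈ T then (1:ℝ) else 0) * g (T.erase i)) = 0 := by
    apply Finset.sum_eq_zero
    intro T hT
    simp [hnotmem T hT]
  rw [h0, zero_add, mul_add, Finset.mul_sum, Finset.mul_sum, ← Finset.sum_add_distrib]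
  apply Finset.sum_congr rfl
  intro T hT
  have hiT : i ∉ T := hnotmem T hT
  have he1 : (insert i T).erase i = T := by
    rw [Finset.erase_insert hiT]
  have he2 : T.erase i = T := Finset.erase_eq_of_notMem hiT
  have hrel := prodP_insert_rel (q := q) hiT
  simp only [Finset.mem_insert_self, if_pos, he1, he2]
  have : prodP q (insert i T) = q i * prodP q T + q i * prodP q (insert i T) := by ring_nf; nlinarith [hrel]
  calc prodP q (insert i T) * (1 * g T) = (q i * prodP q T + q i * prodP q (insert i T)) * g T := by
        rw [← this]; ring
    _ = q i * (prodP q T * g T) + q i * (prodP q (insert i T) * g T) := by ring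

lemma prob_mem (i : Fin n) :
    ∑ T : Finset (Fin n), prodP q T * (if i ∈ T then (1:ℝ) else 0) = q i := by
  have := cond_indep (q := q) i (fun _ => (1:ℝ))
  simp only [mul_one] at this
  rw [this, prodP_sum_one, mul_one]

end Cond

section Expect
variable {n : ℕ} {q : Fin n → ℝ}

lemma expect_mono (hq0 : ∀ i, 0 ≤ q i) (hq1 : ∀ i, q i ≤ 1)
    {f g : Finset (Fin n) → ℝ} (h : ∀ T, f T ≤ g T) :
    ∑ T : Finset (Fin n), prodP q T * f T ≤ ∑ T : Finset (Fin n), prodP q T * g T :=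
  Finset.sum_le_sum fun T _ =>
    mul_le_mul_of_nonneg_left (h T) (prodP_nonneg hq0 hq1 T)

lemma expect_linear_sum (A : Finset (Fin n)) (c : Fin n → ℝ) :
    ∑ T : Finset (Fin n), prodP q T * (∑ i ∈ A, c i * (if i ∈ T then (1:ℝ) else 0))
      = ∑ i ∈ A, c i * q i := by
  have : ∀ T : Finset (Fin n), prodP q T * (∑ i ∈ A, c i * (if i ∈ T then (1:ℝ) else 0))
      = ∑ i ∈ A, c i * (prodP q T * (if i ∈ T then (1:ℝ) else 0)) := by
    intro T
    rw [Finset.mul_sum]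
    exact Finset.sum_congr rfl fun i _ => by ring
  simp_rw [this]
  rw [Finset.sum_comm]
  exact Finset.sum_congr rfl fun i _ => by rw [← Finset.mul_sum, prob_mem]

lemma prob_pair_mem (i1 i2 : Fin n) (h : i1 ≠ i2) :
    ∑ T : Finset (Fin n), prodP q T *
      ((if i1 ∈ T then (1:ℝ) else 0) * (if i2 ∈ T then (1:ℝ) else 0))
      = q i1 * q i2 := by
  have h2 : ∀ T : Finset (Fin n),
      (if i2 ∈ T.erase i1 then (1:ℝ) else 0) = (if i2 ∈ T then (1:ℝ) else 0) := by
    intro T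
    congr 1
    simp [Finset.mem_erase, h.symm]
  have := cond_indep (q := q) i1 (fun T' => if i2 ∈ T' then (1:ℝ) else 0)
  simp only [h2] at this
  rw [this, prob_mem]

end Expect

section FKG
variable {n : ℕ} {q : Fin n → ℝ}

lemma sum_compl_eq (f : Finset (Fin n) → ℝ) :
    ∑ T : Finset (Fin n), f Tᶜ = ∑ T : Finset (Fin n), f T :=
  Fintype.sum_bijective (·ᶜ) compl_involutive.bijective (fun T => f Tᶜ) f (fun T => rfl)

/-- FKG for two antitone nonnegative functions. -/
lemma fkg_antitone (hq0 : ∀ i, 0 ≤ q i) (hq1 : ∀ i, q i ≤ 1)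
    {f g : Finset (Fin n) → ℝ} (hf0 : ∀ T, 0 ≤ f T) (hg0 : ∀ T, 0 ≤ g T)
    (hf : ∀ T1 T2 : Finset (Fin n), T1 ⊆ T2 → f T2 ≤ f T1)
    (hg : ∀ T1 T2 : Finset (Fin n), T1 ⊆ T2 → g T2 ≤ g T1) :
    (∑ T : Finset (Fin n), prodP q T * f T) * (∑ T : Finset (Fin n), prodP q T * g T)
      ≤ ∑ T : Finset (Fin n), prodP q T * (f T * g T) := by
  set μ' : Finset (Fin n) → ℝ := fun T => prodP q Tᶜ with hμ'
  set f' : Finset (Fin n) → ℝ := fun T => f Tᶜ with hf'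
  set g' : Finset (Fin n) → ℝ := fun T => g Tᶜ with hg'
  have hmain := fkg (μ := μ') (f := f') (g := g')
    (fun T => prodP_nonneg hq0 hq1 _) (fun T => hf0 _) (fun T => hg0 _)
    (fun T1 T2 h12 => hf _ _ (Finset.compl_subset_compl.2 h12))
    (fun T1 T2 h12 => hg _ _ (Finset.compl_subset_compl.2 h12))
    (fun a b => ?_)
  · have e1 : ∑ T : Finset (Fin n), μ' T * f' T = ∑ T : Finset (Fin n), prodP q T * f T :=
      sum_compl_eq (fun T => prodP q T * f T)
    have e2 : ∑ T : Finset (Fin n), μ' T * g' T = ∑ T : Finset (Fin n), prodP q T * g T :=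
      sum_compl_eq (fun T => prodP q T * g T)
    have e3 : ∑ T : Finset (Fin n), μ' T * (f' T * g' T)
        = ∑ T : Finset (Fin n), prodP q T * (f T * g T) :=
      sum_compl_eq (fun T => prodP q T * (f T * g T))
    have e4 : ∑ T : Finset (Fin n), μ' T = 1 := by
      rw [sum_compl_eq (fun T => prodP q T) , prodP_sum_one]
    rw [e1, e2, e3, e4, one_mul] at hmain
    exact hmain
  · show prodP q aᶜ * prodP q bᶜ ≤ prodP q (a ⊓ b)ᶜ * prodP q (a ⊔ b)ᶜ
    rw [Finset.inf_eq_inter, Finset.sup_eq_union, Finset.compl_inter, Finset.compl_union]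
    exact le_of_eq (by rw [prodP_mul_prodP]; ring)

/-- FKG for a product of antitone `[0,1]`-valued functions. -/
lemma fkg_prod (hq0 : ∀ i, 0 ≤ q i) (hq1 : ∀ i, q i ≤ 1) {ι : Type*} (J : Finset ι)
    (g : ι → Finset (Fin n) → ℝ)
    (hg0 : ∀ j, ∀ T, 0 ≤ g j T)
    (hg : ∀ j, ∀ T1 T2 : Finset (Fin n), T1 ⊆ T2 → g j T2 ≤ g j T1) :
    ∏ j ∈ J, (∑ T : Finset (Fin n), prodP q T * g j T)
      ≤ ∑ T : Finset (Fin n), prodP q T * ∏ j ∈ J, g j T := by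
  induction J using Finset.induction with
  | empty => simp [prodP_sum_one (q := q) ]
  | insert a J2 hx ih =>
    rw [Finset.prod_insert hx]
    have hP0 : ∀ T, 0 ≤ ∏ j ∈ J2, g j T := fun T => Finset.prod_nonneg fun j _ => hg0 j T
    have hPmono : ∀ T1 T2 : Finset (Fin n), T1 ⊆ T2 → (∏ j ∈ J2, g j T2) ≤ ∏ j ∈ J2, g j T1 :=
      fun T1 T2 h12 => Finset.prod_le_prod (fun j _ => hg0 j T2) (fun j _ => hg j _ _ h12)
    have step := fkg_antitone hq0 hq1 (f := g a) (g := fun T => ∏ j ∈ J2, g j T)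
      (hg0 a) hP0 (hg a) hPmono
    have hmu : (0:ℝ) ≤ ∑ T : Finset (Fin n), prodP q T * g a T := by
      apply Finset.sum_nonneg
      intro T _
      exact mul_nonneg (prodP_nonneg hq0 hq1 T) (hg0 a T)
    calc (∑ T : Finset (Fin n), prodP q T * g a T) * ∏ j ∈ J2, ∑ T : Finset (Fin n), prodP q T * g j T
        ≤ (∑ T : Finset (Fin n), prodP q T * g a T) * ∑ T : Finset (Fin n), prodP q T * ∏ j ∈ J2, g j T :=
          mul_le_mul_of_nonneg_left ih hmu
      _ ≤ ∑ T : Finset (Fin n), prodP q T * (g a T * ∏ j ∈ J2, g j T) := step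
      _ = ∑ T : Finset (Fin n), prodP q T * ∏ j ∈ insert a J2, g j T := by
          apply Finset.sum_congr rfl
          intro T _
          rw [Finset.prod_insert hx]

end FKG

section Main
variable {n m k : ℕ} {s : Fin n → Fin m → ℝ} {x q : Fin n → ℝ}

/-- rewrite a sum over present items as an indicator sum. -/
lemma sum_present (i : Fin n) (T : Finset (Fin n)) (P : Fin n → Prop) (c : Fin n → ℝ) :
    ∑ i' ∈ (T.erase i).filter (fun i'' => P i''), c i'
      = ∑ i' ∈ ((univ : Finset (Fin n)).erase i).filter (fun i'' => P i''),
          c i' * (if i' ∈ T then (1:ℝ) else 0) := by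
  have : ∀ i' ∈ ((univ : Finset (Fin n)).erase i).filter (fun i'' => P i''),
      c i' * (if i' ∈ T then (1:ℝ) else 0) = if i' ∈ T then c i' else 0 := by
    intro i' _
    split <;> ring
  rw [Finset.sum_congr rfl this, Finset.sum_ite, Finset.sum_const_zero, add_zero]
  apply Finset.sum_congr _ (fun _ _ => rfl)
  ext i'
  simp only [Finset.mem_filter, Finset.mem_erase, Finset.mem_univ, true_and]
  tauto

lemma expect_pair_sum (M : Finset (Fin n)) :
    ∑ T : Finset (Fin n), prodP q T *
        (∑ i1 ∈ M, ∑ i2 ∈ M.erase i1,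
          (if i1 ∈ T then (1:ℝ) else 0) * (if i2 ∈ T then (1:ℝ) else 0))
      = ∑ i1 ∈ M, ∑ i2 ∈ M.erase i1, q i1 * q i2 := by
  have swap : ∑ T : Finset (Fin n), prodP q T *
        (∑ i1 ∈ M, ∑ i2 ∈ M.erase i1,
          (if i1 ∈ T then (1:ℝ) else 0) * (if i2 ∈ T then (1:ℝ) else 0))
      = ∑ i1 ∈ M, ∑ i2 ∈ M.erase i1, ∑ T : Finset (Fin n), prodP q T *
          ((if i1 ∈ T then (1:ℝ) else 0) * (if i2 ∈ T then (1:ℝ) else 0)) := by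
    simp_rw [Finset.mul_sum]
    rw [Finset.sum_comm]
    apply Finset.sum_congr rfl
    intro i1 _
    rw [Finset.sum_comm]
  rw [swap]
  apply Finset.sum_congr rfl
  intro i1 _
  apply Finset.sum_congr rfl
  intro i2 hi2
  exact prob_pair_mem i1 i2 (Ne.symm (Finset.mem_erase.1 hi2).1)

set_option maxHeartbeats 1000000 in
lemma surv_expect_bound (hk : 2 ≤ k)
    (hs : ∀ i j, s i j ∈ Set.Icc (0:ℝ) 1)
    (hx : ∀ i, x i ∈ Set.Icc (0:ℝ) 1)
    (hLP : ∀ j, ∑ i', s i' j * x i' ≤ 1)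
    (hLPbig : ∀ j, ∑ i' ∈ univ.filter (fun i' => 1/2 < s i' j), x i' ≤ 1)
    (hq : ∀ i', q i' = x i' / k)
    (i : Fin n) (j : Fin m) (hj : 0 < s i j) :
    1 - (1/(k:ℝ)) * (1 + (2/(k:ℝ)) ^ ((1:ℝ)/3))
      ≤ ∑ T : Finset (Fin n), prodP q T *
          (if (∑ i' ∈ (T.erase i).filter (fun i'' => s i j ≤ s i'' j), s i' j) ≤ 1 - s i j
            then (1:ℝ) else 0) := by
  have hK2 : (2:ℝ) ≤ (k:ℝ) := by exact_mod_cast hk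
  have hK0 : (0:ℝ) < (k:ℝ) := by linarith
  have hq0 : ∀ i', 0 ≤ q i' := by
    intro i'; rw [hq]; exact div_nonneg (hx i').1 (le_of_lt hK0)
  have hq1 : ∀ i', q i' ≤ 1 := by
    intro i'; rw [hq, div_le_one hK0]; linarith [(hx i').2]
  set K : ℝ := (k:ℝ) with hKdef
  set ε : ℝ := (2/K) ^ ((1:ℝ)/3) with hεdef
  have h2K0 : (0:ℝ) < 2/K := by positivity
  have h2K1 : 2/K ≤ 1 := by rw [div_le_one hK0]; linarith
  have hε0 : 0 < ε := Real.rpow_pos_of_pos h2K0 _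
  have hε1 : ε ≤ 1 := Real.rpow_le_one (le_of_lt h2K0) h2K1 (by norm_num)
  have hε3 : ε ^ (3:ℕ) = 2/K := by
    rw [hεdef, ← Real.rpow_natCast ((2/K) ^ ((1:ℝ)/3)) 3, ← Real.rpow_mul (le_of_lt h2K0)]
    norm_num
  set δ : ℝ := ε/2 with hδdef
  have hδ0 : 0 < δ := by positivity
  have hδhalf : δ ≤ 1/2 := by rw [hδdef]; linarith
  set a : ℝ := s i j with hadef
  have ha0 : 0 < a := hj
  have ha1 : a ≤ 1 := (hs i j).2
  set p : ℝ := (1/K) * (1 + ε) with hpdef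
  set surv : Finset (Fin n) → ℝ := fun T =>
    (if (∑ i' ∈ (T.erase i).filter (fun i'' => a ≤ s i'' j), s i' j) ≤ 1 - a
      then (1:ℝ) else 0) with hsurvdef
  suffices hrem : ∑ T : Finset (Fin n), prodP q T * (1 - surv T) ≤ p by
    have hsplit : ∑ T : Finset (Fin n), prodP q T * (1 - surv T)
        = 1 - ∑ T : Finset (Fin n), prodP q T * surv T := by
      simp only [mul_sub, mul_one]
      rw [Finset.sum_sub_distrib, prodP_sum_one]
    rw [hsplit] at hrem
    have : 1 - p ≤ ∑ T : Finset (Fin n), prodP q T * surv T := by linarith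
    exact this
  -- the sum of present large items, rewritten with indicators
  have hSumF : ∀ T : Finset (Fin n),
      (∑ i' ∈ (T.erase i).filter (fun i'' => a ≤ s i'' j), s i' j)
        = ∑ i' ∈ ((univ : Finset (Fin n)).erase i).filter (fun i'' => a ≤ s i'' j),
            s i' j * (if i' ∈ T then (1:ℝ) else 0) :=
    fun T => sum_present i T _ _
  -- expectation of big-item indicator sum
  set Bigs : Finset (Fin n) :=
    ((univ : Finset (Fin n)).erase i).filter (fun i' => 1/2 < s i' j) with hBdef
  have hEBig : ∑ T : Finset (Fin n), prodP q T *
      (∑ i' ∈ Bigs, (1:ℝ) * (if i' ∈ T then (1:ℝ) else 0)) ≤ 1/K := by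
    rw [expect_linear_sum (q := q) Bigs (fun _ => (1:ℝ))]
    simp only [one_mul]
    have : ∑ i' ∈ Bigs, q i' ≤ ∑ i' ∈ univ.filter (fun i' => 1/2 < s i' j), q i' := by
      apply Finset.sum_le_sum_of_subset_of_nonneg
      · intro i' hi'
        simp only [hBdef, Finset.mem_filter, Finset.mem_erase, Finset.mem_univ, true_and] at hi' ⊢
        exact hi'.2
      · intro i' _ _; exact hq0 i'
    refine le_trans this ?_
    have : ∑ i' ∈ univ.filter (fun i' => 1/2 < s i' j), q i'
        = (∑ i' ∈ univ.filter (fun i' => 1/2 < s i' j), x i') / K := by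
      rw [Finset.sum_div]
      exact Finset.sum_congr rfl fun i' _ => hq i'
    rw [this]
    rw [div_le_div_iff₀ hK0 hK0, one_mul]
    have := hLPbig j
    nlinarith [hLPbig j]
  have hBignn : ∀ T : Finset (Fin n),
      0 ≤ ∑ i' ∈ Bigs, (1:ℝ) * (if i' ∈ T then (1:ℝ) else 0) := by
    intro T
    apply Finset.sum_nonneg
    intro i' _
    apply mul_nonneg zero_le_one
    split <;> norm_num
  rcases le_or_gt a (1/2) with hahalf | habig
  · rcases le_or_gt a δ with hsmall | hmed
    · -- Case 2 : `a ≤ δ`, Markov's inequality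
      have h1a : 0 < 1 - a := by linarith
      set RSet := ((univ : Finset (Fin n)).erase i).filter (fun i'' => a ≤ s i'' j) with hRdef
      have hpoint : ∀ T : Finset (Fin n), 1 - surv T ≤
          ∑ i' ∈ RSet, (s i' j / (1-a)) * (if i' ∈ T then (1:ℝ) else 0) := by
        intro T
        have hnn : 0 ≤ ∑ i' ∈ RSet, (s i' j / (1-a)) * (if i' ∈ T then (1:ℝ) else 0) := by
          apply Finset.sum_nonneg
          intro i' _
          apply mul_nonneg (div_nonneg (hs i' j).1 (le_of_lt h1a))
          split <;> norm_num
        by_cases hc : (∑ i' ∈ (T.erase i).filter (fun i'' => a ≤ s i'' j), s i' j) ≤ 1 - a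
        · simp only [hsurvdef, if_pos hc]; linarith
        · simp only [hsurvdef, if_neg hc]
          push_neg at hc
          have heq : ∑ i' ∈ RSet, (s i' j/(1-a)) * (if i' ∈ T then (1:ℝ) else 0)
              = (∑ i' ∈ RSet, s i' j * (if i' ∈ T then (1:ℝ) else 0)) / (1-a) := by
            rw [Finset.sum_div]
            apply Finset.sum_congr rfl
            intro i' _; ring
          rw [heq, ← hSumF T, le_div_iff₀ h1a]
          linarith
      have hE := expect_mono hq0 hq1 hpoint
      rw [expect_linear_sum (q := q) RSet (fun i' => s i' j / (1-a))] at hE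
      have hsum : ∑ i' ∈ RSet, (s i' j / (1-a)) * q i' ≤ 1/((1-a)*K) := by
        have e1 : ∀ i' ∈ RSet, (s i' j / (1-a)) * q i' = (s i' j * x i') / ((1-a)*K) := by
          intro i' _
          rw [hq i', div_mul_div_comm]
        rw [Finset.sum_congr rfl e1, ← Finset.sum_div]
        have hnum : ∑ i' ∈ RSet, s i' j * x i' ≤ 1 := by
          refine le_trans (Finset.sum_le_sum_of_subset_of_nonneg (Finset.subset_univ RSet) ?_) (hLP j)
          intro i' _ _
          exact mul_nonneg (hs i' j).1 (hx i').1
        have hden : 0 < (1-a)*K := by positivity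
        rw [div_le_div_iff₀ hden hden, one_mul]
        nlinarith
      refine le_trans hE (le_trans hsum ?_)
      rw [hpdef, div_le_iff₀ (by positivity : (0:ℝ) < (1-a)*K)]
      have : (1+ε)*(1-a) ≥ 1 := by nlinarith
      calc (1:ℝ) ≤ (1+ε)*(1-a) := this
        _ = 1/K*(1+ε)*((1-a)*K) := by field_simp
    · -- Case 3 : `δ < a ≤ 1/2`
      set M := ((univ : Finset (Fin n)).erase i).filter (fun i' => δ < s i' j) with hMdef
      set DS : Finset (Fin n) → ℝ := fun T => ∑ i1 ∈ M, ∑ i2 ∈ M.erase i1,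
          (if i1 ∈ T then (1:ℝ) else 0) * (if i2 ∈ T then (1:ℝ) else 0) with hDSdef
      have hDSterm : ∀ T : Finset (Fin n), ∀ i1, ∀ i2' ∈ M.erase i1,
          (0:ℝ) ≤ (if i1 ∈ T then (1:ℝ) else 0) * (if i2' ∈ T then (1:ℝ) else 0) := by
        intro T i1 i2' _
        apply mul_nonneg <;> (split <;> norm_num)
      have hDSnn : ∀ T, 0 ≤ DS T := by
        intro T
        apply Finset.sum_nonneg
        intro i1 _
        exact Finset.sum_nonneg (hDSterm T i1)
      have hpoint : ∀ T : Finset (Fin n), 1 - surv T ≤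
          (∑ i' ∈ Bigs, (1:ℝ) * (if i' ∈ T then (1:ℝ) else 0)) + (1/2) * DS T := by
        intro T
        by_cases hc : (∑ i' ∈ (T.erase i).filter (fun i'' => a ≤ s i'' j), s i' j) ≤ 1 - a
        · simp only [hsurvdef, if_pos hc]
          have := hBignn T
          have := hDSnn T
          linarith
        · simp only [hsurvdef, if_neg hc]
          push_neg at hc
          by_cases hbig : ∃ i' ∈ Bigs, i' ∈ T
          · obtain ⟨i0, hi0B, hi0T⟩ := hbig
            have h1 : (1:ℝ) ≤ ∑ i' ∈ Bigs, (1:ℝ) * (if i' ∈ T then (1:ℝ) else 0) := by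
              have := Finset.single_le_sum (f := fun i' => (1:ℝ) * (if i' ∈ T then (1:ℝ) else 0))
                (fun i' _ => by apply mul_nonneg zero_le_one; split <;> norm_num) hi0B
              simpa [hi0T] using this
            have := hDSnn T
            linarith
          · push_neg at hbig
            set F := (T.erase i).filter (fun i'' => a ≤ s i'' j) with hFdef
            have hFT : ∀ i' ∈ F, i' ∈ T ∧ i' ≠ i ∧ a ≤ s i' j := by
              intro i' hi'
              simp only [hFdef, Finset.mem_filter, Finset.mem_erase] at hi'
              exact ⟨hi'.1.2, hi'.1.1, hi'.2⟩
            have hFsmall : ∀ i' ∈ F, s i' j ≤ 1/2 := by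
              intro i' hi'
              by_contra hgt
              push_neg at hgt
              refine hbig i' ?_ (hFT i' hi').1
              exact Finset.mem_filter.2
                ⟨Finset.mem_erase.2 ⟨(hFT i' hi').2.1, Finset.mem_univ i'⟩, hgt⟩
            have hcard : 1 < F.card := by
              by_contra hlt
              push_neg at hlt
              have hsum_le : (∑ i' ∈ F, s i' j) ≤ 1/2 := by
                rcases F.eq_empty_or_nonempty with hemp | ⟨i0, hi0⟩
                · rw [hemp, Finset.sum_empty]; norm_num
                · have hFeq : F = {i0} := by
                    apply Finset.eq_singleton_iff_unique_mem.2
                    refine ⟨hi0, fun y hy => ?_⟩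
                    by_contra hne
                    have := Finset.one_lt_card.2 ⟨y, hy, i0, hi0, hne⟩
                    omega
                  rw [hFeq, Finset.sum_singleton]
                  exact hFsmall i0 hi0
              linarith
            obtain ⟨i1, hi1, i2, hi2, hne⟩ := Finset.one_lt_card.1 hcard
            have hi1M : i1 ∈ M := Finset.mem_filter.2
              ⟨Finset.mem_erase.2 ⟨(hFT i1 hi1).2.1, Finset.mem_univ i1⟩,
                lt_of_lt_of_le hmed (hFT i1 hi1).2.2⟩
            have hi2M : i2 ∈ M := Finset.mem_filter.2
              ⟨Finset.mem_erase.2 ⟨(hFT i2 hi2).2.1, Finset.mem_univ i2⟩,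
                lt_of_lt_of_le hmed (hFT i2 hi2).2.2⟩
            have hi1T : i1 ∈ T := (hFT i1 hi1).1
            have hi2T : i2 ∈ T := (hFT i2 hi2).1
            set f : Fin n → ℝ := fun i1' => ∑ i2' ∈ M.erase i1',
                (if i1' ∈ T then (1:ℝ) else 0) * (if i2' ∈ T then (1:ℝ) else 0) with hfdef
            have hfnn : ∀ i1' ∈ M, 0 ≤ f i1' := fun i1' _ =>
              Finset.sum_nonneg (hDSterm T i1')
            have hf1 : (1:ℝ) ≤ f i1 := by
              have hmem : i2 ∈ M.erase i1 := Finset.mem_erase.2 ⟨hne.symm, hi2M⟩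
              have h := Finset.single_le_sum (f := fun i2' =>
                (if i1 ∈ T then (1:ℝ) else 0) * (if i2' ∈ T then (1:ℝ) else 0))
                (fun i2' hs' => hDSterm T i1 i2' hs') hmem
              have hval : (if i1 ∈ T then (1:ℝ) else 0) * (if i2 ∈ T then (1:ℝ) else 0) = 1 := by
                rw [if_pos hi1T, if_pos hi2T, mul_one]
              calc (1:ℝ) = (if i1 ∈ T then (1:ℝ) else 0) * (if i2 ∈ T then (1:ℝ) else 0) :=
                    hval.symm
                _ ≤ f i1 := h
            have hf2 : (1:ℝ) ≤ f i2 := by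
              have hmem : i1 ∈ M.erase i2 := Finset.mem_erase.2 ⟨hne, hi1M⟩
              have h := Finset.single_le_sum (f := fun i2' =>
                (if i2 ∈ T then (1:ℝ) else 0) * (if i2' ∈ T then (1:ℝ) else 0))
                (fun i2' hs' => hDSterm T i2 i2' hs') hmem
              have hval : (if i2 ∈ T then (1:ℝ) else 0) * (if i1 ∈ T then (1:ℝ) else 0) = 1 := by
                rw [if_pos hi1T, if_pos hi2T, mul_one]
              calc (1:ℝ) = (if i2 ∈ T then (1:ℝ) else 0) * (if i1 ∈ T then (1:ℝ) else 0) :=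
                    hval.symm
                _ ≤ f i2 := h
            have hDS2 : (2:ℝ) ≤ DS T := by
              have hsub : ({i1, i2} : Finset (Fin n)) ⊆ M := by
                intro y hy
                rcases Finset.mem_insert.1 hy with rfl | hy'
                · exact hi1M
                · rw [Finset.mem_singleton.1 hy']; exact hi2M
              have hss := Finset.sum_le_sum_of_subset_of_nonneg hsub
                (fun y hy _ => hfnn y hy)
              rw [Finset.sum_pair hne] at hss
              have : DS T = ∑ i1' ∈ M, f i1' := rfl
              rw [this]
              linarith
            have := hBignn T
            linarith
      have hE := expect_mono hq0 hq1 hpoint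
      have hsplitE : ∑ T : Finset (Fin n), prodP q T *
          ((∑ i' ∈ Bigs, (1:ℝ) * (if i' ∈ T then (1:ℝ) else 0)) + (1/2) * DS T)
          = (∑ T : Finset (Fin n), prodP q T * (∑ i' ∈ Bigs, (1:ℝ) * (if i' ∈ T then (1:ℝ) else 0)))
            + (1/2) * ∑ T : Finset (Fin n), prodP q T * DS T := by
        rw [Finset.mul_sum]
        rw [← Finset.sum_add_distrib]
        apply Finset.sum_congr rfl
        intro T _
        ring
      rw [hsplitE] at hE
      have hEDS : ∑ T : Finset (Fin n), prodP q T * DS T ≤ (1/(δ*K))^2 := by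
        rw [hDSdef, expect_pair_sum M]
        have hMq : ∑ i' ∈ M, q i' ≤ 1/(δ*K) := by
          have hstep : ∀ i' ∈ M, q i' ≤ (s i' j * x i')/(δ*K) := by
            intro i' hi'
            have hδs : δ < s i' j := by
              simp only [hMdef, Finset.mem_filter] at hi'
              exact hi'.2
            rw [hq i']
            rw [div_le_div_iff₀ hK0 (by positivity)]
            have hx0 := (hx i').1
            have key : 0 ≤ (s i' j - δ) * x i' * K :=
              mul_nonneg (mul_nonneg (sub_nonneg.2 (le_of_lt hδs)) hx0) (le_of_lt hK0)
            nlinarith [key]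
          refine le_trans (Finset.sum_le_sum hstep) ?_
          rw [← Finset.sum_div]
          have hnum : ∑ i' ∈ M, s i' j * x i' ≤ 1 := by
            refine le_trans (Finset.sum_le_sum_of_subset_of_nonneg (Finset.subset_univ M) ?_) (hLP j)
            intro i' _ _
            exact mul_nonneg (hs i' j).1 (hx i').1
          rw [div_le_div_iff₀ (by positivity) (by positivity), one_mul]
          nlinarith [mul_le_mul_of_nonneg_right hnum (le_of_lt (mul_pos hδ0 hK0))]
        have hqM : ∀ i1 ∈ M, ∑ i2 ∈ M.erase i1, q i1 * q i2 ≤ q i1 * ∑ i2 ∈ M, q i2 := by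
          intro i1 _
          rw [← Finset.mul_sum]
          apply mul_le_mul_of_nonneg_left _ (hq0 i1)
          exact Finset.sum_le_sum_of_subset_of_nonneg (Finset.erase_subset _ _)
            (fun i2 _ _ => hq0 i2)
        calc ∑ i1 ∈ M, ∑ i2 ∈ M.erase i1, q i1 * q i2
            ≤ ∑ i1 ∈ M, q i1 * ∑ i2 ∈ M, q i2 := Finset.sum_le_sum hqM
          _ = (∑ i1 ∈ M, q i1) * (∑ i2 ∈ M, q i2) := by rw [← Finset.sum_mul]
          _ ≤ (1/(δ*K)) * (1/(δ*K)) := by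
              apply mul_le_mul hMq hMq (Finset.sum_nonneg fun i' _ => hq0 i') (by positivity)
          _ = (1/(δ*K))^2 := by ring
      refine le_trans hE ?_
      have hfinal : 1/K + (1/2) * (1/(δ*K))^2 ≤ p := by
        have hε3K : ε^3 * K = 2 := by
          rw [hε3]
          field_simp
        have hεne : ε ≠ 0 := ne_of_gt hε0
        have hKne : K ≠ 0 := ne_of_gt hK0
        have h1 : ε/K = (ε^3*K)/(ε^2*K^2) := by
          rw [div_eq_div_iff (ne_of_gt hK0) (by positivity : ε^2*K^2 ≠ 0)]
          ring
        rw [hε3K] at h1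
        have heq : (1/2) * (1/(δ*K))^2 = ε/K := by
          rw [h1, hδdef]
          field_simp
        rw [heq, hpdef]
        exact le_of_eq (by ring)
      calc _ ≤ 1/K + (1/2) * (1/(δ*K))^2 := by
            apply add_le_add hEBig
            apply mul_le_mul_of_nonneg_left hEDS (by norm_num)
        _ ≤ p := hfinal
  · -- Case 1 : `1/2 < a`
    have hpoint : ∀ T : Finset (Fin n), 1 - surv T ≤
        ∑ i' ∈ Bigs, (1:ℝ) * (if i' ∈ T then (1:ℝ) else 0) := by
      intro T
      by_cases hc : (∑ i' ∈ (T.erase i).filter (fun i'' => a ≤ s i'' j), s i' j) ≤ 1 - a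
      · simp only [hsurvdef, if_pos hc]
        have := hBignn T
        linarith
      · simp only [hsurvdef, if_neg hc]
        push_neg at hc
        have hFne : ((T.erase i).filter (fun i'' => a ≤ s i'' j)).Nonempty := by
          by_contra hemp
          rw [Finset.not_nonempty_iff_eq_empty] at hemp
          rw [hemp, Finset.sum_empty] at hc
          linarith
        obtain ⟨i0, hi0⟩ := hFne
        simp only [Finset.mem_filter, Finset.mem_erase] at hi0
        have hi0B : i0 ∈ Bigs := Finset.mem_filter.2
          ⟨Finset.mem_erase.2 ⟨hi0.1.1, Finset.mem_univ i0⟩, lt_of_lt_of_le habig hi0.2⟩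
        have h := Finset.single_le_sum (f := fun i' => (1:ℝ) * (if i' ∈ T then (1:ℝ) else 0))
          (fun i' _ => by apply mul_nonneg zero_le_one; split <;> norm_num) hi0B
        have hval : (1:ℝ) * (if i0 ∈ T then (1:ℝ) else 0) = 1 := by
          rw [if_pos hi0.1.2, mul_one]
        have h1 : (1:ℝ) ≤ ∑ i' ∈ Bigs, (1:ℝ) * (if i' ∈ T then (1:ℝ) else 0) := by
          calc (1:ℝ) = 1 * (if i0 ∈ T then (1:ℝ) else 0) := hval.symm
            _ ≤ _ := h
        linarith
    have hE := expect_mono hq0 hq1 hpoint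
    refine le_trans hE (le_trans hEBig ?_)
    rw [hpdef]
    nlinarith [mul_pos (by positivity : (0:ℝ) < 1/K) hε0]

noncomputable def survInd {n m : ℕ} (s : Fin n → Fin m → ℝ) (i : Fin n) (j : Fin m)
    (T : Finset (Fin n)) : ℝ :=
  if (∑ i' ∈ T.filter (fun i'' => s i j ≤ s i'' j), s i' j) ≤ 1 - s i j then (1:ℝ) else 0

lemma survInd_nonneg {n m : ℕ} (s : Fin n → Fin m → ℝ) (i : Fin n) (j : Fin m)
    (T : Finset (Fin n)) : 0 ≤ survInd s i j T := by
  rw [survInd]; split <;> norm_num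

set_option maxHeartbeats 1000000 in
lemma item_bound (hk : 2 ≤ k)
    (hs : ∀ i j, s i j ∈ Set.Icc (0:ℝ) 1)
    (hsparse : ∀ i, ((univ : Finset (Fin m)).filter (fun j => 0 < s i j)).card ≤ k)
    (hx : ∀ i, x i ∈ Set.Icc (0:ℝ) 1)
    (hLP : ∀ j, ∑ i', s i' j * x i' ≤ 1)
    (hLPbig : ∀ j, ∑ i' ∈ univ.filter (fun i' => 1/2 < s i' j), x i' ≤ 1)
    (hq : ∀ i', q i' = x i' / k)
    (i : Fin n) :
    q i * (1 - (1/(k:ℝ)) * (1 + (2/(k:ℝ)) ^ ((1:ℝ)/3)))^k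
      ≤ ∑ T : Finset (Fin n), prodP q T * (if i ∈ altSet' s T then (1:ℝ) else 0) := by
  have hK2 : (2:ℝ) ≤ (k:ℝ) := by exact_mod_cast hk
  have hK0 : (0:ℝ) < (k:ℝ) := by linarith
  have hq0 : ∀ i', 0 ≤ q i' := by
    intro i'; rw [hq]; exact div_nonneg (hx i').1 (le_of_lt hK0)
  have hq1 : ∀ i', q i' ≤ 1 := by
    intro i'; rw [hq, div_le_one hK0]; linarith [(hx i').2]
  have h2K0 : (0:ℝ) < 2/(k:ℝ) := by positivity
  have h2K1 : 2/(k:ℝ) ≤ 1 := by rw [div_le_one hK0]; linarith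
  have hε0 : 0 < (2/(k:ℝ)) ^ ((1:ℝ)/3) := Real.rpow_pos_of_pos h2K0 _
  have hε1 : (2/(k:ℝ)) ^ ((1:ℝ)/3) ≤ 1 :=
    Real.rpow_le_one (le_of_lt h2K0) h2K1 (by norm_num)
  set p : ℝ := (1/(k:ℝ)) * (1 + (2/(k:ℝ)) ^ ((1:ℝ)/3)) with hpdef
  have hp0 : 0 ≤ p := by positivity
  have hp1 : p ≤ 1 := by
    rw [hpdef, div_mul_eq_mul_div, div_le_one hK0]
    linarith
  set N : Finset (Fin m) := (univ : Finset (Fin m)).filter (fun j => 0 < s i j) with hNdef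
  have hG0 : ∀ (j : Fin m) (T : Finset (Fin n)), 0 ≤ survInd s i j (T.erase i) :=
    fun j T => survInd_nonneg s i j _
  have hGanti : ∀ j : Fin m, ∀ T1 T2 : Finset (Fin n), T1 ⊆ T2 →
      survInd s i j (T2.erase i) ≤ survInd s i j (T1.erase i) := by
    intro j T1 T2 h12
    have hsub : (T1.erase i).filter (fun i'' => s i j ≤ s i'' j)
        ⊆ (T2.erase i).filter (fun i'' => s i j ≤ s i'' j) :=
      Finset.filter_subset_filter _ (Finset.erase_subset_erase _ h12)
    have hsums : (∑ i' ∈ (T1.erase i).filter (fun i'' => s i j ≤ s i'' j), s i' j)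
        ≤ ∑ i' ∈ (T2.erase i).filter (fun i'' => s i j ≤ s i'' j), s i' j :=
      Finset.sum_le_sum_of_subset_of_nonneg hsub (fun i' _ _ => (hs i' j).1)
    rw [survInd, survInd]
    by_cases hc : (∑ i' ∈ (T2.erase i).filter (fun i'' => s i j ≤ s i'' j), s i' j) ≤ 1 - s i j
    · rw [if_pos hc, if_pos (le_trans hsums hc)]
    · rw [if_neg hc]
      split <;> norm_num
  -- factorization of the indicator of `i ∈ altSet' s T`
  have ind_eq : ∀ T : Finset (Fin n), (if i ∈ altSet' s T then (1:ℝ) else 0)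
      = (if i ∈ T then (1:ℝ) else 0) * (fun T' : Finset (Fin n) =>
          ∏ j ∈ N, survInd s i j T') (T.erase i) := by
    intro T
    simp only [survInd]
    by_cases hiT : i ∈ T
    · have hsplit : ∀ j, 0 < s i j →
          (∑ i' ∈ T.filter (fun i'' => s i j ≤ s i'' j), s i' j)
            = s i j + ∑ i' ∈ (T.erase i).filter (fun i'' => s i j ≤ s i'' j), s i' j := by
        intro j hj
        have hiF : i ∈ T.filter (fun i'' => s i j ≤ s i'' j) :=
          Finset.mem_filter.2 ⟨hiT, le_refl _⟩
        rw [← Finset.add_sum_erase _ _ hiF, Finset.filter_erase]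
      have hiff : (i ∈ altSet' s T) ↔ ∀ j ∈ N,
          (∑ i' ∈ (T.erase i).filter (fun i'' => s i j ≤ s i'' j), s i' j) ≤ 1 - s i j := by
        rw [altSet', Finset.mem_filter]
        constructor
        · intro h j hj
          have hj' : 0 < s i j := (Finset.mem_filter.1 hj).2
          have := h.2 j hj'
          rw [hsplit j hj'] at this
          linarith
        · intro h
          refine ⟨hiT, fun j hj' => ?_⟩
          have := h j (Finset.mem_filter.2 ⟨Finset.mem_univ j, hj'⟩)
          rw [hsplit j hj']
          linarith
      rw [if_pos hiT, one_mul, Finset.prod_boole]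
      by_cases hall : ∀ j ∈ N,
          (∑ i' ∈ (T.erase i).filter (fun i'' => s i j ≤ s i'' j), s i' j) ≤ 1 - s i j
      · rw [if_pos (hiff.2 hall), if_pos hall]
      · rw [if_neg (fun hmem => hall (hiff.1 hmem)), if_neg hall]
    · have hno : i ∉ altSet' s T := by
        rw [altSet', Finset.mem_filter]
        exact fun h => hiT h.1
      rw [if_neg hno, if_neg hiT, zero_mul]
  -- conditioning on `i ∈ S`
  have hcond : ∑ T : Finset (Fin n), prodP q T * (if i ∈ altSet' s T then (1:ℝ) else 0)
      = q i * ∑ T : Finset (Fin n), prodP q T * ∏ j ∈ N, survInd s i j (T.erase i) := by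
    rw [Finset.sum_congr rfl (fun T _ => by rw [ind_eq T])]
    exact cond_indep i (fun T' : Finset (Fin n) => ∏ j ∈ N, survInd s i j T')
  rw [hcond]
  have hfkg := fkg_prod hq0 hq1 N (fun j T => survInd s i j (T.erase i)) hG0 hGanti
  have hper : ∀ j ∈ N, 1 - p ≤ ∑ T : Finset (Fin n), prodP q T * survInd s i j (T.erase i) := by
    intro j hj
    have hj' : 0 < s i j := (Finset.mem_filter.1 hj).2
    have hb := surv_expect_bound (q := q) hk hs hx hLP hLPbig hq i j hj'
    rw [hpdef]
    simp only [survInd]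
    exact hb
  have hprod : (1 - p)^k ≤ ∏ j ∈ N,
      (∑ T : Finset (Fin n), prodP q T * survInd s i j (T.erase i)) := by
    calc (1 - p)^k ≤ (1 - p)^(N.card) :=
          pow_le_pow_of_le_one (by linarith) (by linarith) (hsparse i)
      _ = ∏ j ∈ N, (1 - p) := (Finset.prod_const (1-p)).symm
      _ ≤ ∏ j ∈ N, (∑ T : Finset (Fin n), prodP q T * survInd s i j (T.erase i)) :=
          Finset.prod_le_prod (fun j _ => by linarith) hper
  apply mul_le_mul_of_nonneg_left _ (hq0 i)
  exact le_trans hprod hfkg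

lemma altSet'_feasible (hs : ∀ i j, s i j ∈ Set.Icc (0:ℝ) 1)
    (T : Finset (Fin n)) (j : Fin m) :
    ∑ i ∈ altSet' s T, s i j ≤ 1 := by
  set A := (altSet' s T).filter (fun i => 0 < s i j) with hAdef
  have hsplit : ∑ i ∈ A, s i j = ∑ i ∈ altSet' s T, s i j := by
    rw [hAdef]
    apply Finset.sum_filter_of_ne
    intro i _ hne
    rcases lt_or_eq_of_le (hs i j).1 with h | h
    · exact h
    · exact absurd h.symm hne
  rw [← hsplit]
  rcases A.eq_empty_or_nonempty with hemp | hne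
  · rw [hemp, Finset.sum_empty]; norm_num
  · obtain ⟨i0, hi0A, hmin⟩ := Finset.exists_min_image A (fun i => s i j) hne
    have hi0 : i0 ∈ altSet' s T ∧ 0 < s i0 j := Finset.mem_filter.1 hi0A
    have hi0alt := Finset.mem_filter.1 hi0.1
    have h1 : (∑ i' ∈ T.filter (fun i'' => s i0 j ≤ s i'' j), s i' j) ≤ 1 :=
      hi0alt.2 j hi0.2
    refine le_trans (Finset.sum_le_sum_of_subset_of_nonneg ?_ ?_) h1
    · intro i hiA
      have hi := Finset.mem_filter.1 hiA
      have hialt := Finset.mem_filter.1 hi.1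
      exact Finset.mem_filter.2 ⟨hialt.1, hmin i hiA⟩
    · intro i' _ _
      exact (hs i' j).1

end Main


/-- randomized rounding (with probabilities `x i / k`) followed by
alteration always yields a feasible set, and the expected weight is at least
`(1/k)·(1 - (1/k)(1 + (2/k)^{1/3}))^k` times the strengthened-LP value; as
`k → ∞` this gives an `(ek + o(k))`-approximation. -/
theorem ek_approximation (n m k : ℕ) (hk : 2 ≤ k) (s : Fin n → Fin m → ℝ)
    (hs : ∀ i j, s i j ∈ Set.Icc (0:ℝ) 1)
    (hsparse : ∀ i, ((univ : Finset (Fin m)).filter (fun j => 0 < s i j)).card ≤ k)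
    (x : Fin n → ℝ) (hx : ∀ i, x i ∈ Set.Icc (0:ℝ) 1)
    (hLP : ∀ j, ∑ i, s i j * x i ≤ 1)
    (hLPbig : ∀ j, ∑ i ∈ univ.filter (fun i => 1/2 < s i j), x i ≤ 1)
    (w : Fin n → ℝ) (hw : ∀ i, 0 ≤ w i)
    (q : Fin n → ℝ) (hq : ∀ i, q i = x i / k) :
    (∀ T : Finset (Fin n), ∀ j : Fin m, ∑ i ∈ altSet' s T, s i j ≤ 1) ∧
    exV q (fun T => ∑ i ∈ altSet' s T, w i)
      ≥ (1 / k) * (1 - (1 / (k:ℝ)) * (1 + (2 / (k:ℝ)) ^ ((1:ℝ)/3)))^k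
          * ∑ i, w i * x i := by
  constructor
  · intro T j
    exact altSet'_feasible hs T j
  · rw [ge_iff_le, exV]
    have hrew : ∀ T : Finset (Fin n), (∑ i ∈ altSet' s T, w i)
        = ∑ i : Fin n, w i * (if i ∈ altSet' s T then (1:ℝ) else 0) := by
      intro T
      rw [Finset.sum_congr rfl (fun i (_ : i ∈ univ) => by
        rw [mul_ite, mul_one, mul_zero] :
          ∀ i ∈ (univ : Finset (Fin n)), w i * (if i ∈ altSet' s T then (1:ℝ) else 0)
            = if i ∈ altSet' s T then w i else 0)]
      rw [Finset.sum_ite_mem, Finset.univ_inter]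
    have hswap : ∑ T : Finset (Fin n), prodP q T * (∑ i ∈ altSet' s T, w i)
        = ∑ i : Fin n, w i * ∑ T : Finset (Fin n), prodP q T *
            (if i ∈ altSet' s T then (1:ℝ) else 0) := by
      have h1 : ∀ T : Finset (Fin n), prodP q T * (∑ i ∈ altSet' s T, w i)
          = ∑ i : Fin n, w i * (prodP q T * (if i ∈ altSet' s T then (1:ℝ) else 0)) := by
        intro T
        rw [hrew T, Finset.mul_sum]
        apply Finset.sum_congr rfl
        intro i _
        ring
      rw [Finset.sum_congr rfl (fun T _ => h1 T), Finset.sum_comm]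
      apply Finset.sum_congr rfl
      intro i _
      rw [← Finset.mul_sum]
    rw [hswap]
    calc (1 / (k:ℝ)) * (1 - (1 / (k:ℝ)) * (1 + (2 / (k:ℝ)) ^ ((1:ℝ)/3)))^k * ∑ i, w i * x i
        = ∑ i : Fin n, w i * (q i * (1 - (1 / (k:ℝ)) * (1 + (2 / (k:ℝ)) ^ ((1:ℝ)/3)))^k) := by
          rw [Finset.mul_sum]
          apply Finset.sum_congr rfl
          intro i _
          rw [hq i]
          ring
      _ ≤ ∑ i : Fin n, w i * ∑ T : Finset (Fin n), prodP q T *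
            (if i ∈ altSet' s T then (1:ℝ) else 0) := by
          apply Finset.sum_le_sum
          intro i _
          exact mul_le_mul_of_nonneg_left
            (item_bound hk hs hsparse hx (fun j => hLP j) hLPbig hq i) (hw i)
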